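/- arXiv:2301.01910 — 4 statements merged into one kernel-verified Lean document; each statement's English description precedes it below -/
import Mathlib

section
/- Let b > 0 and let (f_j)_{j≥1} be a sequence of functions f_j : ℝ → ℝ that are twice continuously differentiable on [0,b], and let C₁, C₂ ≥ 0 be constants with |f_j'(α)| ≤ C₁ and |f_j''(α)| ≤ C₂ for all j ≥ 1 and all α ∈ [0,b]. Assume that for every α ∈ [0,b] the limit λ(α) = lim_{m→∞} (1/m) Σ_{j=1}^m f_j(α) exists. Then the limit F = lim_{m→∞} (1/m) Σ_{j=1}^m f_j'(0) exists, |F| ≤ C₁, and λ has right derivative F at 0, i.e. lim_{α→0⁺} (λ(α) − λ(0))/α = F. -/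
open Filter

theorem stmt_3 (b : ℝ) (hb : 0 < b) (f f' f'' : ℕ → ℝ → ℝ) (C1 C2 : ℝ)
    (hC1 : 0 ≤ C1) (hC2 : 0 ≤ C2)
    (hderiv1 : ∀ j : ℕ, 1 ≤ j → ∀ α ∈ Set.Icc (0:ℝ) b,
      HasDerivWithinAt (f j) (f' j α) (Set.Icc 0 b) α)
    (hderiv2 : ∀ j : ℕ, 1 ≤ j → ∀ α ∈ Set.Icc (0:ℝ) b,
      HasDerivWithinAt (f' j) (f'' j α) (Set.Icc 0 b) α)
    (hcont : ∀ j : ℕ, 1 ≤ j → ContinuousOn (f'' j) (Set.Icc 0 b))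
    (hbd1 : ∀ j : ℕ, 1 ≤ j → ∀ α ∈ Set.Icc (0:ℝ) b, |f' j α| ≤ C1)
    (hbd2 : ∀ j : ℕ, 1 ≤ j → ∀ α ∈ Set.Icc (0:ℝ) b, |f'' j α| ≤ C2)
    (lam : ℝ → ℝ)
    (hlam : ∀ α ∈ Set.Icc (0:ℝ) b,
      Tendsto (fun m : ℕ => (1 / (m:ℝ)) * ∑ j ∈ Finset.Icc 1 m, f j α)
        atTop (nhds (lam α))) :
    ∃ F : ℝ,
      Tendsto (fun m : ℕ => (1 / (m:ℝ)) * ∑ j ∈ Finset.Icc 1 m, f' j 0)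
          atTop (nhds F) ∧
      |F| ≤ C1 ∧
      Tendsto (fun α : ℝ => (lam α - lam 0) / α)
        (nhdsWithin 0 (Set.Ioi 0)) (nhds F) := by
  have h0b : (0:ℝ) ∈ Set.Icc (0:ℝ) b := ⟨le_refl _, hb.le⟩
  set Fm : ℕ → ℝ := fun m => (1 / (m:ℝ)) * ∑ j ∈ Finset.Icc 1 m, f' j 0 with hFm
  set G : ℕ → ℝ → ℝ := fun m α =>
    ((1 / (m:ℝ)) * ∑ j ∈ Finset.Icc 1 m, f j α
      - (1 / (m:ℝ)) * ∑ j ∈ Finset.Icc 1 m, f j 0) / α with hG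
  -- step 1: |f' j t - f' j 0| ≤ C2 * t
  have hstep1 : ∀ j : ℕ, 1 ≤ j → ∀ t ∈ Set.Icc (0:ℝ) b, |f' j t - f' j 0| ≤ C2 * t := by
    intro j hj t ht
    have := Convex.norm_image_sub_le_of_norm_hasDerivWithin_le
      (f := f' j) (f' := f'' j) (s := Set.Icc 0 b) (C := C2)
      (hderiv2 j hj) (fun x hx => by simpa using hbd2 j hj x hx)
      (convex_Icc 0 b) h0b ht
    simpa [Real.norm_eq_abs, abs_of_nonneg ht.1] using this
  -- Taylor-type bound
  have htaylor : ∀ j : ℕ, 1 ≤ j → ∀ α ∈ Set.Ioc (0:ℝ) b,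
      |f j α - f j 0 - f' j 0 * α| ≤ (C2 * α) * α := by
    intro j hj α hα
    have hsub : Set.Icc (0:ℝ) α ⊆ Set.Icc 0 b := Set.Icc_subset_Icc le_rfl hα.2
    have hd : ∀ t ∈ Set.Icc (0:ℝ) α,
        HasDerivWithinAt (fun t => f j t - f' j 0 * t) (f' j t - f' j 0) (Set.Icc 0 α) t := by
      intro t ht
      exact ((hderiv1 j hj t (hsub ht)).mono hsub).sub
        (((hasDerivWithinAt_id t _).const_mul (f' j 0)).congr_deriv (by ring))
    have hbound : ∀ t ∈ Set.Icc (0:ℝ) α, ‖f' j t - f' j 0‖ ≤ C2 * α := by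
      intro t ht
      refine le_trans ?_ (mul_le_mul_of_nonneg_left ht.2 hC2)
      simpa [Real.norm_eq_abs] using hstep1 j hj t (hsub ht)
    have := Convex.norm_image_sub_le_of_norm_hasDerivWithin_le
      hd hbound (convex_Icc 0 α) (Set.left_mem_Icc.2 hα.1.le)
      (Set.right_mem_Icc.2 hα.1.le)
    have h2 : f j α - f j 0 - f' j 0 * α = (f j α - f' j 0 * α) - (f j 0 - f' j 0 * 0) := by
      ring
    rw [h2]
    simpa [Real.norm_eq_abs, abs_of_nonneg hα.1.le] using this
  -- bound for |Fm m - G m α|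
  have hFG : ∀ m : ℕ, 1 ≤ m → ∀ α ∈ Set.Ioc (0:ℝ) b, |G m α - Fm m| ≤ C2 * α := by
    intro m hm α hα
    have hαpos := hα.1
    have hmpos : (0:ℝ) < m := by exact_mod_cast hm
    have hsum : |∑ j ∈ Finset.Icc 1 m, (f j α - f j 0 - f' j 0 * α)|
        ≤ (m : ℝ) * ((C2 * α) * α) := by
      calc |∑ j ∈ Finset.Icc 1 m, (f j α - f j 0 - f' j 0 * α)|
          ≤ ∑ j ∈ Finset.Icc 1 m, |f j α - f j 0 - f' j 0 * α| :=
            Finset.abs_sum_le_sum_abs _ _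
        _ ≤ ∑ _j ∈ Finset.Icc 1 m, (C2 * α) * α := by
            refine Finset.sum_le_sum fun j hj => ?_
            exact htaylor j (Finset.mem_Icc.mp hj).1 α hα
        _ = (m : ℝ) * ((C2 * α) * α) := by
            rw [Finset.sum_const, Nat.card_Icc]; simp [nsmul_eq_mul]
    have hGF : G m α - Fm m
        = (1 / (m:ℝ)) * (∑ j ∈ Finset.Icc 1 m, (f j α - f j 0 - f' j 0 * α)) / α := by
      simp only [hG, hFm]
      rw [Finset.sum_sub_distrib, Finset.sum_sub_distrib]
      field_simp
      rw [← Finset.mul_sum]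
    rw [hGF]
    rw [abs_div, abs_mul, abs_of_nonneg (by positivity : (0:ℝ) ≤ 1 / (m:ℝ)),
      abs_of_pos hαpos]
    rw [div_le_iff₀ hαpos]
    calc 1 / (m:ℝ) * |∑ j ∈ Finset.Icc 1 m, (f j α - f j 0 - f' j 0 * α)|
        ≤ 1 / (m:ℝ) * ((m : ℝ) * ((C2 * α) * α)) := by
          exact mul_le_mul_of_nonneg_left hsum (by positivity)
      _ = C2 * α * α := by field_simp
  -- Fm bounded
  have hFmbd : ∀ m : ℕ, |Fm m| ≤ C1 := by
    intro m
    rcases Nat.eq_zero_or_pos m with h | h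
    · simp [hFm, h, hC1]
    · have hmpos : (0:ℝ) < m := by exact_mod_cast h
      have : |∑ j ∈ Finset.Icc 1 m, f' j 0| ≤ (m : ℝ) * C1 := by
        calc |∑ j ∈ Finset.Icc 1 m, f' j 0| ≤ ∑ j ∈ Finset.Icc 1 m, |f' j 0| :=
              Finset.abs_sum_le_sum_abs _ _
          _ ≤ ∑ _j ∈ Finset.Icc 1 m, C1 := Finset.sum_le_sum fun j hj =>
              hbd1 j (Finset.mem_Icc.mp hj).1 0 h0b
          _ = (m : ℝ) * C1 := by rw [Finset.sum_const, Nat.card_Icc]; simp [nsmul_eq_mul]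
      rw [hFm, abs_mul, abs_of_nonneg (by positivity : (0:ℝ) ≤ 1 / (m:ℝ))]
      calc 1 / (m:ℝ) * |∑ j ∈ Finset.Icc 1 m, f' j 0| ≤ 1 / (m:ℝ) * ((m:ℝ) * C1) :=
            mul_le_mul_of_nonneg_left this (by positivity)
        _ = C1 := by field_simp
  -- G m α converges to g α
  have hGlim : ∀ α ∈ Set.Ioc (0:ℝ) b,
      Tendsto (fun m => G m α) atTop (nhds ((lam α - lam 0) / α)) := by
    intro α hα
    exact ((hlam α ⟨hα.1.le, hα.2⟩).sub (hlam 0 h0b)).div_const α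
  -- Cauchy
  have hcauchy : CauchySeq Fm := by
    rw [Metric.cauchySeq_iff]
    intro ε hε
    set α : ℝ := min (ε / (4 * (C2 + 1))) b with hαdef
    have hαpos : 0 < α := lt_min (by positivity) hb
    have hαmem : α ∈ Set.Ioc (0:ℝ) b := ⟨hαpos, min_le_right _ _⟩
    have hC2α : C2 * α ≤ ε / 4 := by
      calc C2 * α ≤ (C2 + 1) * (ε / (4 * (C2 + 1))) := by
            apply mul_le_mul (by linarith) (min_le_left _ _) hαpos.le (by linarith)
        _ = ε / 4 := by field_simp
    have hGc : CauchySeq (fun m => G m α) := (hGlim α hαmem).cauchySeq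
    rw [Metric.cauchySeq_iff] at hGc
    obtain ⟨N, hN⟩ := hGc (ε / 4) (by positivity)
    refine ⟨max N 1, fun m hm n hn => ?_⟩
    have hm1 : 1 ≤ m := le_trans (le_max_right _ _) hm
    have hn1 : 1 ≤ n := le_trans (le_max_right _ _) hn
    have h1 := hFG m hm1 α hαmem
    have h2 := hFG n hn1 α hαmem
    have h3 := hN m (le_trans (le_max_left _ _) hm) n (le_trans (le_max_left _ _) hn)
    rw [Real.dist_eq] at h3 ⊢
    have : |Fm m - Fm n| ≤ |G m α - Fm m| + |G m α - G n α| + |G n α - Fm n| := by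
      have := abs_sub_le (Fm m) (G m α) (Fm n)
      have h4 := abs_sub_le (G m α) (G n α) (Fm n)
      rw [abs_sub_comm (Fm m) (G m α)] at this
      linarith
    linarith
  obtain ⟨F, hF⟩ := cauchySeq_tendsto_of_complete hcauchy
  refine ⟨F, hF, ?_, ?_⟩
  · exact le_of_tendsto' hF.abs hFmbd
  · -- |g α - F| ≤ C2 * α on Ioc 0 b
    have hclose : ∀ α ∈ Set.Ioc (0:ℝ) b, |(lam α - lam 0) / α - F| ≤ C2 * α := by
      intro α hα
      have ht : Tendsto (fun m => |G m α - Fm m|) atTop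
          (nhds |(lam α - lam 0) / α - F|) := ((hGlim α hα).sub hF).abs
      refine le_of_tendsto ht ?_
      filter_upwards [eventually_ge_atTop 1] with m hm using hFG m hm α hα
    rw [tendsto_iff_dist_tendsto_zero]
    refine squeeze_zero' (g := fun α => C2 * α) ?_ ?_ ?_
    · exact Eventually.of_forall fun t => dist_nonneg
    · filter_upwards [Ioc_mem_nhdsGT hb] with α hα
      rw [Real.dist_eq]
      exact hclose α hα
    · have : Tendsto (fun α : ℝ => C2 * α) (nhds 0) (nhds (C2 * 0)) :=
        (continuous_const.mul continuous_id).tendsto 0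
      simpa using this.mono_left nhdsWithin_le_nhds
end

section
/- Let m ≥ 1, let 0 < d_min ≤ d_max, 0 < k_min ≤ k_max, and C_d⁽¹⁾, C_d⁽²⁾, C_k⁽¹⁾, C_g⁽²⁾ ≥ 0. For j = 0, …, m let d_j, g_j, k_j : ℝ → ℝ be twice continuously differentiable functions satisfying, for all α: k_{j+1}(α) = k_j(α)/(1 + d_j(α) k_j(α)) + g_{j+1}(α) for 0 ≤ j ≤ m−1; k_m(α) = k_0(α); d_min ≤ d_j(α) ≤ d_max; k_min ≤ k_j(α) ≤ k_max; |d_j'(α)| ≤ C_d⁽¹⁾; |d_j''(α)| ≤ C_d⁽²⁾; |k_j'(α)| ≤ C_k⁽¹⁾; and |g_j''(α)| ≤ C_g⁽²⁾. Set β_max = 1/(1 + d_min k_min)² and η_max = [k_max²·(C_d⁽²⁾ + C_d⁽²⁾ d_max k_max + 2(C_d⁽¹⁾)² k_max) + 2C_k⁽¹⁾·(C_k⁽¹⁾ d_max + 2C_d⁽¹⁾ k_max)]/(1 + d_min k_min)³ + C_g⁽²⁾. Then |k_j''(α)| ≤ η_max/(1 − β_max) for all 0 ≤ j ≤ m and all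 α. -/
lemma aux_cd2 (p : ℝ → ℝ) (hp : ContDiff ℝ 2 p) :
    Differentiable ℝ p ∧ Differentiable ℝ (deriv p) := by
  rw [show (2 : WithTop ℕ∞) = 1 + 1 from rfl] at hp
  obtain ⟨h1, -, h2⟩ := contDiff_succ_iff_deriv.mp hp
  exact ⟨h1, h2.differentiable one_ne_zero⟩

lemma step_lem (dmin dmax kmin kmax Cd1 Cd2 Ck1 Cg2 : ℝ)
    (hdmin : 0 < dmin) (hkmin : 0 < kmin) (hdd : dmin ≤ dmax) (hkk : kmin ≤ kmax)
    (hCd1 : 0 ≤ Cd1) (hCd2 : 0 ≤ Cd2) (hCk1 : 0 ≤ Ck1)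
    (p q r t : ℝ → ℝ)
    (hp : ContDiff ℝ 2 p) (hq : ContDiff ℝ 2 q) (hr : ContDiff ℝ 2 r)
    (hrec : ∀ α, t α = p α / (1 + q α * p α) + r α)
    (hqbd : ∀ α, q α ∈ Set.Icc dmin dmax)
    (hpbd : ∀ α, p α ∈ Set.Icc kmin kmax)
    (hq1 : ∀ α, |deriv q α| ≤ Cd1)
    (hq2 : ∀ α, |deriv (deriv q) α| ≤ Cd2)
    (hp1 : ∀ α, |deriv p α| ≤ Ck1)
    (hr2 : ∀ α, |deriv (deriv r) α| ≤ Cg2)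
    (α : ℝ) :
    |deriv (deriv t) α| ≤ (1 / (1 + dmin * kmin) ^ 2) * |deriv (deriv p) α| +
      ((kmax ^ 2 * (Cd2 + Cd2 * dmax * kmax + 2 * Cd1 ^ 2 * kmax)
          + 2 * Ck1 * (Ck1 * dmax + 2 * Cd1 * kmax)) / (1 + dmin * kmin) ^ 3 + Cg2) := by
  have hkmax : (0:ℝ) < kmax := lt_of_lt_of_le hkmin hkk
  have hdmax : (0:ℝ) < dmax := lt_of_lt_of_le hdmin hdd
  obtain ⟨hpd, hPd⟩ := aux_cd2 p hp
  obtain ⟨hqd, hQd⟩ := aux_cd2 q hq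
  obtain ⟨hrd, hRd⟩ := aux_cd2 r hr
  have hc0 : (0:ℝ) < 1 + dmin * kmin := by nlinarith
  have hulb : ∀ x, 1 + dmin * kmin ≤ 1 + q x * p x := by
    intro x
    obtain ⟨h1, h2⟩ := hqbd x
    obtain ⟨h3, h4⟩ := hpbd x
    nlinarith
  have hupos : ∀ x, (0:ℝ) < 1 + q x * p x := fun x => lt_of_lt_of_le hc0 (hulb x)
  have hune : ∀ x, (1 + q x * p x) ≠ 0 := fun x => (hupos x).ne'
  have hu : ∀ x, HasDerivAt (fun y => 1 + q y * p y)
      (deriv q x * p x + q x * deriv p x) x := fun x =>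
    (((hqd x).hasDerivAt.mul (hpd x).hasDerivAt).const_add 1)
  have hdt : deriv t = fun x =>
      (deriv p x * (1 + q x * p x) - p x * (deriv q x * p x + q x * deriv p x)) /
        (1 + q x * p x) ^ 2 + deriv r x := by
    funext x
    have ht : t = fun y => p y / (1 + q y * p y) + r y := funext hrec
    rw [ht]
    exact (((hpd x).hasDerivAt.div (hu x) (hune x)).add (hrd x).hasDerivAt).deriv
  -- second derivative
  have hP : HasDerivAt (deriv p) (deriv (deriv p) α) α := (hPd α).hasDerivAt
  have hQ : HasDerivAt (deriv q) (deriv (deriv q) α) α := (hQd α).hasDerivAt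
  have hR : HasDerivAt (deriv r) (deriv (deriv r) α) α := (hRd α).hasDerivAt
  have hp' : HasDerivAt p (deriv p α) α := (hpd α).hasDerivAt
  have hq' : HasDerivAt q (deriv q α) α := (hqd α).hasDerivAt
  have hU1 : HasDerivAt (fun x => deriv q x * p x + q x * deriv p x)
      ((deriv (deriv q) α * p α + deriv q α * deriv p α) +
        (deriv q α * deriv p α + q α * deriv (deriv p) α)) α :=
    (hQ.mul hp').add (hq'.mul hP)
  have hNum : HasDerivAt
      (fun x => deriv p x * (1 + q x * p x) - p x * (deriv q x * p x + q x * deriv p x))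
      ((deriv (deriv p) α * (1 + q α * p α) + deriv p α * (deriv q α * p α + q α * deriv p α)) -
        (deriv p α * (deriv q α * p α + q α * deriv p α) + p α *
          ((deriv (deriv q) α * p α + deriv q α * deriv p α) +
            (deriv q α * deriv p α + q α * deriv (deriv p) α)))) α :=
    (hP.mul (hu α)).sub (hp'.mul hU1)
  have hDen : HasDerivAt (fun x => (1 + q x * p x) ^ 2)
      (2 * (1 + q α * p α) ^ 1 * (deriv q α * p α + q α * deriv p α)) α := by
    simpa using (hu α).fun_pow 2
  have hDne : ((1 + q α * p α) ^ 2) ≠ 0 := pow_ne_zero 2 (hune α)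
  have hbig := ((hNum.fun_div hDen hDne).fun_add hR)
  set a := p α with ha
  set b := q α with hb
  set P := deriv p α with hPv
  set Q := deriv q α with hQv
  set A := deriv (deriv p) α with hA
  set B := deriv (deriv q) α with hB
  set R := deriv (deriv r) α with hR2
  have hune' : (1 + b * a) ≠ 0 := hune α
  have key : deriv (deriv t) α =
      A / (1 + b * a) ^ 2 +
        ((-(a ^ 2 * B * (1 + b * a)) + 2 * a ^ 3 * Q ^ 2 - 2 * b * P ^ 2 - 4 * a * P * Q)
            / (1 + b * a) ^ 3 + R) := by
    rw [hdt, hbig.deriv]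
    field_simp
    ring
  -- bounds on atoms
  obtain ⟨hb1, hb2⟩ := hqbd α
  obtain ⟨ha1, ha2⟩ := hpbd α
  have ha0 : (0:ℝ) ≤ a := le_trans hkmin.le ha1
  have hb0 : (0:ℝ) ≤ b := le_trans hdmin.le hb1
  have hP1 : |P| ≤ Ck1 := hp1 α
  have hQ1 : |Q| ≤ Cd1 := hq1 α
  have hB1 : |B| ≤ Cd2 := hq2 α
  have hR1 : |R| ≤ Cg2 := hr2 α
  have hu0 : (0:ℝ) < 1 + b * a := hupos α
  have hulb' : 1 + dmin * kmin ≤ 1 + b * a := hulb α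
  have huub : 1 + b * a ≤ 1 + dmax * kmax := by nlinarith
  -- numerator bound
  have t1 : |a ^ 2 * B * (1 + b * a)| ≤ kmax ^ 2 * Cd2 * (1 + dmax * kmax) := by
    rw [abs_mul, abs_mul, abs_of_nonneg (by positivity : (0:ℝ) ≤ a ^ 2),
      abs_of_pos hu0]
    gcongr
  have t2 : |2 * a ^ 3 * Q ^ 2| ≤ 2 * kmax ^ 3 * Cd1 ^ 2 := by
    rw [abs_mul, abs_mul, abs_of_nonneg (by norm_num : (0:ℝ) ≤ 2),
      abs_of_nonneg (by positivity : (0:ℝ) ≤ a ^ 3),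
      abs_of_nonneg (by positivity : (0:ℝ) ≤ Q ^ 2)]
    have hQ2 : Q ^ 2 ≤ Cd1 ^ 2 := by
      rw [← sq_abs]
      exact pow_le_pow_left₀ (abs_nonneg Q) hQ1 2
    gcongr
  have t3 : |2 * b * P ^ 2| ≤ 2 * dmax * Ck1 ^ 2 := by
    rw [abs_mul, abs_mul, abs_of_nonneg (by norm_num : (0:ℝ) ≤ 2),
      abs_of_nonneg hb0, abs_of_nonneg (by positivity : (0:ℝ) ≤ P ^ 2)]
    have hP2 : P ^ 2 ≤ Ck1 ^ 2 := by
      rw [← sq_abs]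
      exact pow_le_pow_left₀ (abs_nonneg P) hP1 2
    gcongr
  have t4 : |4 * a * P * Q| ≤ 4 * kmax * Ck1 * Cd1 := by
    rw [abs_mul, abs_mul, abs_mul, abs_of_nonneg (by norm_num : (0:ℝ) ≤ 4),
      abs_of_nonneg ha0]
    gcongr
  have hnum : |-(a ^ 2 * B * (1 + b * a)) + 2 * a ^ 3 * Q ^ 2 - 2 * b * P ^ 2 - 4 * a * P * Q|
      ≤ kmax ^ 2 * (Cd2 + Cd2 * dmax * kmax + 2 * Cd1 ^ 2 * kmax)
          + 2 * Ck1 * (Ck1 * dmax + 2 * Cd1 * kmax) := by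
    have b1 := abs_le.mp t1
    have b2 := abs_le.mp t2
    have b3 := abs_le.mp t3
    have b4 := abs_le.mp t4
    rw [abs_le]
    constructor <;> linarith [b1.1, b1.2, b2.1, b2.2, b3.1, b3.2, b4.1, b4.2]
  -- putting it together
  have hfrac : |(-(a ^ 2 * B * (1 + b * a)) + 2 * a ^ 3 * Q ^ 2 - 2 * b * P ^ 2
        - 4 * a * P * Q) / (1 + b * a) ^ 3|
      ≤ (kmax ^ 2 * (Cd2 + Cd2 * dmax * kmax + 2 * Cd1 ^ 2 * kmax)
          + 2 * Ck1 * (Ck1 * dmax + 2 * Cd1 * kmax)) / (1 + dmin * kmin) ^ 3 := by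
    rw [abs_div, abs_of_pos (by positivity : (0:ℝ) < (1 + b * a) ^ 3)]
    exact div_le_div₀ (le_trans (abs_nonneg _) hnum) hnum (by positivity) (by gcongr)
  have hfirst : |A / (1 + b * a) ^ 2| ≤ 1 / (1 + dmin * kmin) ^ 2 * |A| := by
    rw [abs_div, abs_of_pos (by positivity : (0:ℝ) < (1 + b * a) ^ 2), one_div,
      inv_mul_eq_div]
    gcongr
  calc |deriv (deriv t) α| = |A / (1 + b * a) ^ 2 +
        ((-(a ^ 2 * B * (1 + b * a)) + 2 * a ^ 3 * Q ^ 2 - 2 * b * P ^ 2 - 4 * a * P * Q)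
            / (1 + b * a) ^ 3 + R)| := by rw [key]
    _ ≤ |A / (1 + b * a) ^ 2| + (|(-(a ^ 2 * B * (1 + b * a)) + 2 * a ^ 3 * Q ^ 2
          - 2 * b * P ^ 2 - 4 * a * P * Q) / (1 + b * a) ^ 3| + |R|) :=
        le_trans (abs_add_le _ _) (by gcongr; exact abs_add_le _ _)
    _ ≤ _ := by
        have := add_le_add hfirst (add_le_add hfrac hR1)
        linarith

theorem stmt_11 (m : ℕ) (hm : 1 ≤ m)
    (dmin dmax kmin kmax Cd1 Cd2 Ck1 Cg2 : ℝ)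
    (hdmin : 0 < dmin) (hdd : dmin ≤ dmax) (hkmin : 0 < kmin) (hkk : kmin ≤ kmax)
    (hCd1 : 0 ≤ Cd1) (hCd2 : 0 ≤ Cd2) (hCk1 : 0 ≤ Ck1) (hCg2 : 0 ≤ Cg2)
    (d g k : ℕ → ℝ → ℝ)
    (hsd : ∀ j ≤ m, ContDiff ℝ 2 (d j))
    (hsg : ∀ j ≤ m, ContDiff ℝ 2 (g j))
    (hsk : ∀ j ≤ m, ContDiff ℝ 2 (k j))
    (hrec : ∀ j < m, ∀ α : ℝ, k (j + 1) α = k j α / (1 + d j α * k j α) + g (j + 1) α)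
    (hper : ∀ α : ℝ, k m α = k 0 α)
    (hdbd : ∀ j ≤ m, ∀ α : ℝ, d j α ∈ Set.Icc dmin dmax)
    (hkbd : ∀ j ≤ m, ∀ α : ℝ, k j α ∈ Set.Icc kmin kmax)
    (hd1 : ∀ j ≤ m, ∀ α : ℝ, |deriv (d j) α| ≤ Cd1)
    (hd2 : ∀ j ≤ m, ∀ α : ℝ, |deriv (deriv (d j)) α| ≤ Cd2)
    (hk1 : ∀ j ≤ m, ∀ α : ℝ, |deriv (k j) α| ≤ Ck1)
    (hg2 : ∀ j ≤ m, ∀ α : ℝ, |deriv (deriv (g j)) α| ≤ Cg2) :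
    ∀ j ≤ m, ∀ α : ℝ,
      |deriv (deriv (k j)) α| ≤
        ((kmax ^ 2 * (Cd2 + Cd2 * dmax * kmax + 2 * Cd1 ^ 2 * kmax)
            + 2 * Ck1 * (Ck1 * dmax + 2 * Cd1 * kmax)) / (1 + dmin * kmin) ^ 3
          + Cg2)
        / (1 - 1 / (1 + dmin * kmin) ^ 2) := by
  have hkmax : (0:ℝ) < kmax := lt_of_lt_of_le hkmin hkk
  have hdmax : (0:ℝ) < dmax := lt_of_lt_of_le hdmin hdd
  have hc0 : (0:ℝ) < 1 + dmin * kmin := by nlinarith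
  have hc1 : (1:ℝ) < 1 + dmin * kmin := by nlinarith
  set β : ℝ := 1 / (1 + dmin * kmin) ^ 2 with hβ
  set E : ℝ := (kmax ^ 2 * (Cd2 + Cd2 * dmax * kmax + 2 * Cd1 ^ 2 * kmax)
      + 2 * Ck1 * (Ck1 * dmax + 2 * Cd1 * kmax)) / (1 + dmin * kmin) ^ 3 + Cg2 with hE
  set M : ℝ := E / (1 - β) with hM
  have hβ0 : 0 ≤ β := by positivity
  have hβ1 : β < 1 := by
    rw [hβ, div_lt_one (by positivity)]
    nlinarith
  have hE0 : 0 ≤ E := by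
    apply add_nonneg _ hCg2
    apply div_nonneg _ (by positivity)
    positivity
  have hM0 : 0 ≤ M := div_nonneg hE0 (by linarith)
  have hEM : E = (1 - β) * M := by
    rw [hM, mul_div_cancel₀]
    linarith
  -- one step
  have hstep : ∀ j < m, ∀ α : ℝ,
      |deriv (deriv (k (j + 1))) α| ≤ β * |deriv (deriv (k j)) α| + E := by
    intro j hj α
    have hjm : j ≤ m := le_of_lt hj
    have hj1 : j + 1 ≤ m := hj
    exact step_lem dmin dmax kmin kmax Cd1 Cd2 Ck1 Cg2 hdmin hkmin hdd hkk hCd1 hCd2 hCk1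
      (k j) (d j) (g (j + 1)) (k (j + 1)) (hsk j hjm) (hsd j hjm) (hsg (j + 1) hj1)
      (hrec j hj) (hdbd j hjm) (hkbd j hjm) (hd1 j hjm) (hd2 j hjm) (hk1 j hjm)
      (hg2 (j + 1) hj1) α
  -- geometric bound
  have geom : ∀ j ≤ m, ∀ α : ℝ,
      |deriv (deriv (k j)) α| ≤ β ^ j * |deriv (deriv (k 0)) α| + (1 - β ^ j) * M := by
    intro j
    induction j with
    | zero => intro _ α; simp
    | succ n ih =>
      intro hn α
      have hn' : n < m := hn
      have h1 := hstep n hn' α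
      have h2 := ih (le_of_lt hn') α
      have h3 : β * |deriv (deriv (k n)) α| ≤
          β * (β ^ n * |deriv (deriv (k 0)) α| + (1 - β ^ n) * M) :=
        mul_le_mul_of_nonneg_left h2 hβ0
      have h4 : β * (β ^ n * |deriv (deriv (k 0)) α| + (1 - β ^ n) * M) + E =
          β ^ (n + 1) * |deriv (deriv (k 0)) α| + (1 - β ^ (n + 1)) * M := by
        rw [hEM]; ring
      calc |deriv (deriv (k (n + 1))) α| ≤ β * |deriv (deriv (k n)) α| + E := h1
        _ ≤ β * (β ^ n * |deriv (deriv (k 0)) α| + (1 - β ^ n) * M) + E := by linarith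
        _ = β ^ (n + 1) * |deriv (deriv (k 0)) α| + (1 - β ^ (n + 1)) * M := h4
  -- periodicity gives bound at 0
  have hper2 : deriv (deriv (k m)) = deriv (deriv (k 0)) := by
    rw [funext hper]
  have h0 : ∀ α : ℝ, |deriv (deriv (k 0)) α| ≤ M := by
    intro α
    have h := geom m le_rfl α
    rw [hper2] at h
    have hβm : β ^ m < 1 := pow_lt_one₀ hβ0 hβ1 (by omega)
    nlinarith [h, hβm, abs_nonneg (deriv (deriv (k 0)) α)]
  intro j hj α
  have h := geom j hj α
  have h0' := h0 α
  have hβj : 0 ≤ β ^ j := pow_nonneg hβ0 j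
  have h5 : β ^ j * |deriv (deriv (k 0)) α| ≤ β ^ j * M :=
    mul_le_mul_of_nonneg_left h0' hβj
  have h6 : β ^ j * M + (1 - β ^ j) * M = M := by ring
  linarith
end

section
/- Let d_min > 0, C ≥ 0 and c₀ > 0. Let a, b : ℝ → ℝ² be C¹ curves with ‖a(α)‖ ≥ d_min, ‖b(α)‖ ≥ d_min, ‖a'(α)‖ ≤ C and ‖b'(α)‖ ≤ C for all α. Define x(α) = ⟨a(α), b(α)⟩/(‖a(α)‖·‖b(α)‖) and c(α) = √((x(α) + 1)/2), and assume c(α) ≥ c₀ for all α. Then c is continuously differentiable and |c'(α)| ≤ C/(d_min·c₀) for all α. -/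
open Real

private lemma hasDerivAt_norm_aux {E : Type*} [NormedAddCommGroup E] [InnerProductSpace ℝ E]
    {a : ℝ → E} {a' : E} {α : ℝ} (h : HasDerivAt a a' α) (h0 : a α ≠ 0) :
    HasDerivAt (fun t => ‖a t‖) ((inner ℝ (a α) a' : ℝ) / ‖a α‖) α := by
  have h1 : HasDerivAt (fun t => (inner ℝ (a t) (a t) : ℝ))
      ((inner ℝ (a α) a' : ℝ) + inner ℝ a' (a α)) α := h.inner ℝ h
  have hne : (inner ℝ (a α) (a α) : ℝ) ≠ 0 := by
    rw [real_inner_self_eq_norm_mul_norm]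
    have hA : (0:ℝ) < ‖a α‖ := norm_pos_iff.mpr h0
    positivity
  have h2 := h1.sqrt hne
  have hs : ∀ t : E, Real.sqrt (inner ℝ t t : ℝ) = ‖t‖ := fun t => by
    rw [real_inner_self_eq_norm_mul_norm, Real.sqrt_mul_self (norm_nonneg _)]
  have hA : (0:ℝ) < ‖a α‖ := norm_pos_iff.mpr h0
  have : ((inner ℝ (a α) a' : ℝ) + inner ℝ a' (a α)) / (2 * Real.sqrt (inner ℝ (a α) (a α) : ℝ))
      = (inner ℝ (a α) a' : ℝ) / ‖a α‖ := by
    rw [hs, real_inner_comm a' (a α)]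
    field_simp
    ring
  rw [this] at h2
  simpa only [hs] using h2

set_option maxHeartbeats 1000000 in
theorem stmt_15 (dmin C c0 : ℝ) (hdmin : 0 < dmin) (hC : 0 ≤ C) (hc0 : 0 < c0)
    (a b : ℝ → EuclideanSpace ℝ (Fin 2))
    (ha : ContDiff ℝ 1 a) (hb : ContDiff ℝ 1 b)
    (hna : ∀ α : ℝ, dmin ≤ ‖a α‖) (hnb : ∀ α : ℝ, dmin ≤ ‖b α‖)
    (hda : ∀ α : ℝ, ‖deriv a α‖ ≤ C) (hdb : ∀ α : ℝ, ‖deriv b α‖ ≤ C)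
    (hc : ∀ α : ℝ, c0 ≤ Real.sqrt (((inner ℝ (a α) (b α) : ℝ) / (‖a α‖ * ‖b α‖) + 1) / 2)) :
    ContDiff ℝ 1
      (fun α : ℝ => Real.sqrt (((inner ℝ (a α) (b α) : ℝ) / (‖a α‖ * ‖b α‖) + 1) / 2)) ∧
    ∀ α : ℝ,
      |deriv (fun α : ℝ =>
          Real.sqrt (((inner ℝ (a α) (b α) : ℝ) / (‖a α‖ * ‖b α‖) + 1) / 2)) α|
        ≤ C / (dmin * c0) := by
  have hA : ∀ α, (0:ℝ) < ‖a α‖ := fun α => hdmin.trans_le (hna α)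
  have hB : ∀ α, (0:ℝ) < ‖b α‖ := fun α => hdmin.trans_le (hnb α)
  have haz : ∀ α, a α ≠ 0 := fun α => norm_pos_iff.mp (hA α)
  have hbz : ∀ α, b α ≠ 0 := fun α => norm_pos_iff.mp (hB α)
  have hxcd : ContDiff ℝ 1 (fun t => (inner ℝ (a t) (b t) : ℝ) / (‖a t‖ * ‖b t‖)) :=
    (ha.inner ℝ hb).div ((ha.norm ℝ haz).mul (hb.norm ℝ hbz))
      (fun t => by have := hA t; have := hB t; positivity)
  have harg : ∀ α, 0 < ((inner ℝ (a α) (b α) : ℝ) / (‖a α‖ * ‖b α‖) + 1) / 2 := by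
    intro α
    by_contra h
    push_neg at h
    have h0 : Real.sqrt (((inner ℝ (a α) (b α) : ℝ) / (‖a α‖ * ‖b α‖) + 1) / 2) = 0 :=
      Real.sqrt_eq_zero'.mpr h
    have := hc α
    rw [h0] at this
    linarith
  constructor
  · rw [contDiff_iff_contDiffAt]
    intro α
    exact (((hxcd.add contDiff_const).div_const 2).contDiffAt).sqrt (harg α).ne'
  · intro α
    have hdiffa : HasDerivAt a (deriv a α) α := (ha.differentiable one_ne_zero α).hasDerivAt
    have hdiffb : HasDerivAt b (deriv b α) α := (hb.differentiable one_ne_zero α).hasDerivAt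
    set a' := deriv a α with ha'
    set b' := deriv b α with hb'
    have h1 : HasDerivAt (fun t => (inner ℝ (a t) (b t) : ℝ))
        ((inner ℝ (a α) b' : ℝ) + inner ℝ a' (b α)) α := hdiffa.inner ℝ hdiffb
    have h2 : HasDerivAt (fun t => ‖a t‖) ((inner ℝ (a α) a' : ℝ) / ‖a α‖) α :=
      hasDerivAt_norm_aux hdiffa (haz α)
    have h3 : HasDerivAt (fun t => ‖b t‖) ((inner ℝ (b α) b' : ℝ) / ‖b α‖) α :=
      hasDerivAt_norm_aux hdiffb (hbz α)
    have h4 : HasDerivAt (fun t => ‖a t‖ * ‖b t‖)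
        ((inner ℝ (a α) a' : ℝ) / ‖a α‖ * ‖b α‖ + ‖a α‖ * ((inner ℝ (b α) b' : ℝ) / ‖b α‖)) α :=
      h2.mul h3
    have hNne : ‖a α‖ * ‖b α‖ ≠ 0 := by have := hA α; have := hB α; positivity
    set D : ℝ := (((inner ℝ (a α) b' : ℝ) + inner ℝ a' (b α)) * (‖a α‖ * ‖b α‖) -
        (inner ℝ (a α) (b α) : ℝ) *
          ((inner ℝ (a α) a' : ℝ) / ‖a α‖ * ‖b α‖ + ‖a α‖ * ((inner ℝ (b α) b' : ℝ) / ‖b α‖))) /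
        (‖a α‖ * ‖b α‖) ^ 2 with hDdef
    have hD : HasDerivAt (fun t => (inner ℝ (a t) (b t) : ℝ) / (‖a t‖ * ‖b t‖)) D α :=
      h1.div h4 hNne
    have h5 : HasDerivAt (fun t => ((inner ℝ (a t) (b t) : ℝ) / (‖a t‖ * ‖b t‖) + 1) / 2)
        (D / 2) α := (hD.add_const 1).div_const 2
    have h6 := h5.sqrt (harg α).ne'
    have h7 : deriv (fun α : ℝ =>
        Real.sqrt (((inner ℝ (a α) (b α) : ℝ) / (‖a α‖ * ‖b α‖) + 1) / 2)) α
        = D / 2 / (2 * Real.sqrt (((inner ℝ (a α) (b α) : ℝ) / (‖a α‖ * ‖b α‖) + 1) / 2)) :=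
      h6.deriv
    rw [h7]
    -- Bound |D| ≤ 2*C/dmin
    set w1 : EuclideanSpace ℝ (Fin 2) :=
      (‖b α‖)⁻¹ • b α - ((inner ℝ (a α) (b α) : ℝ) / (‖a α‖ ^ 2 * ‖b α‖)) • a α with hw1def
    set w2 : EuclideanSpace ℝ (Fin 2) :=
      (‖a α‖)⁻¹ • a α - ((inner ℝ (a α) (b α) : ℝ) / (‖a α‖ * ‖b α‖ ^ 2)) • b α with hw2def
    have hDeq : D = (inner ℝ a' w1 : ℝ) / ‖a α‖ + (inner ℝ b' w2 : ℝ) / ‖b α‖ := by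
      rw [hDdef, hw1def, hw2def]
      simp only [inner_sub_right, real_inner_smul_right]
      rw [real_inner_comm a' (a α), real_inner_comm b' (a α), real_inner_comm b' (b α)]
      have hA' := (hA α).ne'
      have hB' := (hB α).ne'
      generalize (inner ℝ (a α) (b α) : ℝ) = I
      generalize (inner ℝ (a α) b' : ℝ) = q
      generalize (inner ℝ a' (b α) : ℝ) = p
      generalize (inner ℝ (a α) a' : ℝ) = r
      generalize (inner ℝ (b α) b' : ℝ) = s
      field_simp
      ring
    have hcs : |(inner ℝ (a α) (b α) : ℝ)| ≤ ‖a α‖ * ‖b α‖ := abs_real_inner_le_norm _ _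
    have hw1sq : (inner ℝ w1 w1 : ℝ) = 1 - (inner ℝ (a α) (b α) : ℝ) ^ 2 / (‖a α‖ ^ 2 * ‖b α‖ ^ 2) := by
      rw [hw1def]
      simp only [inner_sub_left, inner_sub_right, real_inner_smul_left, real_inner_smul_right]
      rw [real_inner_comm (b α) (a α), real_inner_self_eq_norm_mul_norm,
        real_inner_self_eq_norm_mul_norm]
      have hA' := (hA α).ne'
      have hB' := (hB α).ne'
      generalize (inner ℝ (a α) (b α) : ℝ) = I
      field_simp
      ring
    have hw2sq : (inner ℝ w2 w2 : ℝ) = 1 - (inner ℝ (a α) (b α) : ℝ) ^ 2 / (‖a α‖ ^ 2 * ‖b α‖ ^ 2) := by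
      rw [hw2def]
      simp only [inner_sub_left, inner_sub_right, real_inner_smul_left, real_inner_smul_right]
      rw [real_inner_comm (b α) (a α), real_inner_self_eq_norm_mul_norm,
        real_inner_self_eq_norm_mul_norm]
      have hA' := (hA α).ne'
      have hB' := (hB α).ne'
      generalize (inner ℝ (a α) (b α) : ℝ) = I
      field_simp
      ring
    have hw1n : ‖w1‖ ≤ 1 := by
      have h' : ‖w1‖ ^ 2 ≤ 1 := by
        rw [← real_inner_self_eq_norm_sq, hw1sq]
        have : 0 ≤ (inner ℝ (a α) (b α) : ℝ) ^ 2 / (‖a α‖ ^ 2 * ‖b α‖ ^ 2) := by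
          have := hA α; have := hB α; positivity
        linarith
      nlinarith [norm_nonneg w1]
    have hw2n : ‖w2‖ ≤ 1 := by
      have h' : ‖w2‖ ^ 2 ≤ 1 := by
        rw [← real_inner_self_eq_norm_sq, hw2sq]
        have : 0 ≤ (inner ℝ (a α) (b α) : ℝ) ^ 2 / (‖a α‖ ^ 2 * ‖b α‖ ^ 2) := by
          have := hA α; have := hB α; positivity
        linarith
      nlinarith [norm_nonneg w2]
    have ht1 : |(inner ℝ a' w1 : ℝ)| ≤ C := by
      calc |(inner ℝ a' w1 : ℝ)| ≤ ‖a'‖ * ‖w1‖ := abs_real_inner_le_norm _ _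
        _ ≤ C * 1 := mul_le_mul (hda α) hw1n (norm_nonneg _) hC
        _ = C := mul_one C
    have ht2 : |(inner ℝ b' w2 : ℝ)| ≤ C := by
      calc |(inner ℝ b' w2 : ℝ)| ≤ ‖b'‖ * ‖w2‖ := abs_real_inner_le_norm _ _
        _ ≤ C * 1 := mul_le_mul (hdb α) hw2n (norm_nonneg _) hC
        _ = C := mul_one C
    have hDb : |D| ≤ 2 * C / dmin := by
      rw [hDeq]
      calc |(inner ℝ a' w1 : ℝ) / ‖a α‖ + (inner ℝ b' w2 : ℝ) / ‖b α‖|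
          ≤ |(inner ℝ a' w1 : ℝ) / ‖a α‖| + |(inner ℝ b' w2 : ℝ) / ‖b α‖| := abs_add_le _ _
        _ = |(inner ℝ a' w1 : ℝ)| / ‖a α‖ + |(inner ℝ b' w2 : ℝ)| / ‖b α‖ := by
            rw [abs_div, abs_div, abs_of_pos (hA α), abs_of_pos (hB α)]
        _ ≤ C / dmin + C / dmin := by
            gcongr <;> first | exact ht1 | exact ht2 | exact hna α | exact hnb α
        _ = 2 * C / dmin := by ring
    have hs : c0 ≤ Real.sqrt (((inner ℝ (a α) (b α) : ℝ) / (‖a α‖ * ‖b α‖) + 1) / 2) := hc α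
    have hspos : 0 < Real.sqrt (((inner ℝ (a α) (b α) : ℝ) / (‖a α‖ * ‖b α‖) + 1) / 2) :=
      hc0.trans_le hs
    have h2s : (0:ℝ) < 2 * Real.sqrt (((inner ℝ (a α) (b α) : ℝ) / (‖a α‖ * ‖b α‖) + 1) / 2) := by
      linarith
    calc |D / 2 / (2 * Real.sqrt (((inner ℝ (a α) (b α) : ℝ) / (‖a α‖ * ‖b α‖) + 1) / 2))|
        = |D| / 2 / (2 * Real.sqrt (((inner ℝ (a α) (b α) : ℝ) / (‖a α‖ * ‖b α‖) + 1) / 2)) := by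
          rw [abs_div, abs_div, abs_two, abs_of_pos h2s]
      _ ≤ (2 * C / dmin) / 2 / (2 * c0) := by gcongr
      _ = C / (dmin * (2 * c0)) := by field_simp
      _ ≤ C / (dmin * c0) := by gcongr; linarith
end

section
/- Let b > 0 and let (f_j)_{j≥1} be a sequence of functions f_j : ℝ → ℝ that are twice continuously differentiable on [0,b], with constants C₁, C₂ ≥ 0 such that |f_j'(α)| ≤ C₁ and |f_j''(α)| ≤ C₂ for all j ≥ 1 and all α ∈ [0,b]. Assume that for every α ∈ [0,b] the limit λ(α) = lim_{m→∞} (1/m) Σ_{j=1}^m f_j(α) exists. Then λ is differentiable at every α ∈ (0,b) and |λ'(α)| ≤ C₁ for all α ∈ (0,b). -/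
open Filter

private lemma avg_abs_le (m : ℕ) (h : ℕ → ℝ) (C : ℝ) (hC : 0 ≤ C)
    (hb : ∀ j ∈ Finset.Icc 1 m, |h j| ≤ C) :
    |(1/(m:ℝ)) * ∑ j ∈ Finset.Icc 1 m, h j| ≤ C := by
  rcases Nat.eq_zero_or_pos m with rfl | hm
  · simpa using hC
  have h1 : |∑ j ∈ Finset.Icc 1 m, h j| ≤ (m:ℝ) * C := by
    calc |∑ j ∈ Finset.Icc 1 m, h j| ≤ ∑ j ∈ Finset.Icc 1 m, |h j| :=
          Finset.abs_sum_le_sum_abs _ _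
      _ ≤ ∑ j ∈ Finset.Icc 1 m, C := Finset.sum_le_sum hb
      _ = (m:ℝ) * C := by rw [Finset.sum_const, Nat.card_Icc]; simp [mul_comm]
  have hm' : (0:ℝ) < m := by exact_mod_cast hm
  rw [abs_mul, abs_of_pos (show (0:ℝ) < 1/(m:ℝ) by positivity)]
  calc 1/(m:ℝ) * |∑ j ∈ Finset.Icc 1 m, h j| ≤ 1/(m:ℝ) * ((m:ℝ)*C) :=
        mul_le_mul_of_nonneg_left h1 (by positivity)
    _ = C := by field_simp

theorem stmt_18 (b : ℝ) (hb : 0 < b) (f f' f'' : ℕ → ℝ → ℝ) (C1 C2 : ℝ)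
    (hC1 : 0 ≤ C1) (hC2 : 0 ≤ C2)
    (hderiv1 : ∀ j : ℕ, 1 ≤ j → ∀ α ∈ Set.Icc (0:ℝ) b,
      HasDerivWithinAt (f j) (f' j α) (Set.Icc 0 b) α)
    (hderiv2 : ∀ j : ℕ, 1 ≤ j → ∀ α ∈ Set.Icc (0:ℝ) b,
      HasDerivWithinAt (f' j) (f'' j α) (Set.Icc 0 b) α)
    (hcont : ∀ j : ℕ, 1 ≤ j → ContinuousOn (f'' j) (Set.Icc 0 b))
    (hbd1 : ∀ j : ℕ, 1 ≤ j → ∀ α ∈ Set.Icc (0:ℝ) b, |f' j α| ≤ C1)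
    (hbd2 : ∀ j : ℕ, 1 ≤ j → ∀ α ∈ Set.Icc (0:ℝ) b, |f'' j α| ≤ C2)
    (lam : ℝ → ℝ)
    (hlam : ∀ α ∈ Set.Icc (0:ℝ) b,
      Tendsto (fun m : ℕ => (1 / (m:ℝ)) * ∑ j ∈ Finset.Icc 1 m, f j α)
        atTop (nhds (lam α))) :
    ∀ α ∈ Set.Ioo (0:ℝ) b, DifferentiableAt ℝ lam α ∧ |deriv lam α| ≤ C1 := by
  set S := Set.Icc (0:ℝ) b with hS
  set g : ℕ → ℝ → ℝ := fun m t => (1/(m:ℝ)) * ∑ j ∈ Finset.Icc 1 m, f j t with hgdef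
  set g' : ℕ → ℝ → ℝ := fun m t => (1/(m:ℝ)) * ∑ j ∈ Finset.Icc 1 m, f' j t with hg'def
  set g'' : ℕ → ℝ → ℝ := fun m t => (1/(m:ℝ)) * ∑ j ∈ Finset.Icc 1 m, f'' j t with hg''def
  -- derivatives of the averages
  have hg : ∀ m, ∀ t ∈ S, HasDerivWithinAt (g m) (g' m t) S t := by
    intro m t ht
    exact (HasDerivWithinAt.fun_sum (fun j hj =>
      hderiv1 j (Finset.mem_Icc.mp hj).1 t ht)).const_mul _
  have hg' : ∀ m, ∀ t ∈ S, HasDerivWithinAt (g' m) (g'' m t) S t := by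
    intro m t ht
    exact (HasDerivWithinAt.fun_sum (fun j hj =>
      hderiv2 j (Finset.mem_Icc.mp hj).1 t ht)).const_mul _
  have hbdg'' : ∀ m, ∀ t ∈ S, |g'' m t| ≤ C2 := by
    intro m t ht
    exact avg_abs_le m _ C2 hC2 (fun j hj => hbd2 j (Finset.mem_Icc.mp hj).1 t ht)
  have hbdg' : ∀ m, ∀ t ∈ S, |g' m t| ≤ C1 := by
    intro m t ht
    exact avg_abs_le m _ C1 hC1 (fun j hj => hbd1 j (Finset.mem_Icc.mp hj).1 t ht)
  -- Lipschitz bound for g'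
  have hlip : ∀ m, ∀ s ∈ S, ∀ t ∈ S, |g' m t - g' m s| ≤ C2 * |t - s| := by
    intro m s hs t ht
    have := Convex.norm_image_sub_le_of_norm_hasDerivWithin_le
      (f := g' m) (f' := g'' m) (hg' m) (fun x hx => hbdg'' m x hx)
      (convex_Icc 0 b) hs ht
    simpa [Real.norm_eq_abs] using this
  intro α hα
  have hαS : α ∈ S := Set.Ioo_subset_Icc_self hα
  -- Taylor-type estimate
  have hT : ∀ m, ∀ β ∈ S, |g m β - g m α - g' m α * (β - α)| ≤ C2 * (β - α)^2 := by
    intro m β hβ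
    have hsub : Set.uIcc α β ⊆ S := Set.uIcc_subset_Icc hαS hβ
    have hφ : ∀ t ∈ Set.uIcc α β,
        HasDerivWithinAt (fun t => g m t - g' m α * t) (g' m t - g' m α) (Set.uIcc α β) t := by
      intro t ht
      have h2 : HasDerivWithinAt (fun t : ℝ => g' m α * t) (g' m α) (Set.uIcc α β) t := by
        simpa using (hasDerivWithinAt_id t (Set.uIcc α β)).const_mul (g' m α)
      exact ((hg m t (hsub ht)).mono hsub).sub h2
    have hbound : ∀ t ∈ Set.uIcc α β, ‖g' m t - g' m α‖ ≤ C2 * |β - α| := by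
      intro t ht
      calc ‖g' m t - g' m α‖ = |g' m t - g' m α| := rfl
        _ ≤ C2 * |t - α| := hlip m α hαS t (hsub ht)
        _ ≤ C2 * |β - α| := by
            apply mul_le_mul_of_nonneg_left (Set.abs_sub_left_of_mem_uIcc ht) hC2
    have := Convex.norm_image_sub_le_of_norm_hasDerivWithin_le hφ hbound
      (convex_uIcc α β) (Set.left_mem_uIcc) (Set.right_mem_uIcc)
    have heq : (g m β - g' m α * β) - (g m α - g' m α * α)
        = g m β - g m α - g' m α * (β - α) := by ring
    rw [Real.norm_eq_abs, Real.norm_eq_abs, heq] at this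
    calc |g m β - g m α - g' m α * (β - α)| ≤ C2 * |β - α| * |β - α| := this
      _ = C2 * (β - α)^2 := by rw [mul_assoc, abs_mul_abs_self, sq]
  -- the sequence (g' m α) is Cauchy
  have hcauchy : CauchySeq (fun m => g' m α) := by
    rw [Metric.cauchySeq_iff]
    intro ε hε
    obtain ⟨hα0, hαb⟩ := hα
    set δ : ℝ := min (ε/(4*(C2+1))) (b - α) with hδdef
    have hδpos : 0 < δ := lt_min (by positivity) (by linarith)
    have hδle : C2 * δ ≤ ε/4 := by
      have h1 : δ ≤ ε/(4*(C2+1)) := min_le_left _ _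
      have h2 : C2 * δ ≤ C2 * (ε/(4*(C2+1))) := mul_le_mul_of_nonneg_left h1 hC2
      have h3 : C2 * (ε/(4*(C2+1))) ≤ (C2+1) * (ε/(4*(C2+1))) := by
        apply mul_le_mul_of_nonneg_right (by linarith) (by positivity)
      have h4 : (C2+1) * (ε/(4*(C2+1))) = ε/4 := by field_simp
      linarith
    set β : ℝ := α + δ with hβdef
    have hβS : β ∈ S := ⟨by linarith, by have := min_le_right (ε/(4*(C2+1))) (b-α); simp only [hβdef]; linarith⟩
    -- difference quotients converge
    have hD : Tendsto (fun m => (g m β - g m α)/δ) atTop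
        (nhds ((lam β - lam α)/δ)) :=
      ((hlam β hβS).sub (hlam α hαS)).div_const δ
    have hDc : CauchySeq (fun m => (g m β - g m α)/δ) := hD.cauchySeq
    rw [Metric.cauchySeq_iff] at hDc
    obtain ⟨N, hN⟩ := hDc (ε/2) (by positivity)
    refine ⟨N, fun m hm n hn => ?_⟩
    have key : ∀ k, |g' k α - (g k β - g k α)/δ| ≤ C2 * δ := by
      intro k
      have hT' := hT k β hβS
      have hβα : β - α = δ := by simp [hβdef]
      rw [hβα] at hT'
      have heq : g' k α - (g k β - g k α)/δ = -(g k β - g k α - g' k α * δ)/δ := by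
        field_simp
        ring
      rw [heq, abs_div, abs_neg, abs_of_pos hδpos, div_le_iff₀ hδpos]
      calc |g k β - g k α - g' k α * δ| ≤ C2 * δ^2 := hT'
        _ = C2 * δ * δ := by ring
    have hmn := hN m hm n hn
    rw [Real.dist_eq] at hmn ⊢
    have e1 := key m
    have e2 := key n
    have : |g' m α - g' n α| ≤ |g' m α - (g m β - g m α)/δ|
        + |(g m β - g m α)/δ - (g n β - g n α)/δ|
        + |(g n β - g n α)/δ - g' n α| := by
      have := abs_sub_le (g' m α) ((g m β - g m α)/δ) (g' n α)
      have h2 := abs_sub_le ((g m β - g m α)/δ) ((g n β - g n α)/δ) (g' n α)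
      linarith
    rw [abs_sub_comm ((g n β - g n α)/δ)] at this
    linarith
  obtain ⟨L, hL⟩ := cauchySeq_tendsto_of_complete hcauchy
  have hLbd : |L| ≤ C1 := by
    have : Tendsto (fun m => |g' m α|) atTop (nhds |L|) := hL.abs
    exact le_of_tendsto this (Eventually.of_forall (fun m => hbdg' m α hαS))
  -- pass to the limit in the Taylor estimate
  have hkey : ∀ β ∈ S, |lam β - lam α - L*(β - α)| ≤ C2 * (β - α)^2 := by
    intro β hβ
    have ht : Tendsto (fun m => |g m β - g m α - g' m α * (β - α)|) atTop
        (nhds |lam β - lam α - L*(β - α)|) :=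
      (((hlam β hβ).sub (hlam α hαS)).sub (hL.mul_const (β - α))).abs
    exact le_of_tendsto ht (Eventually.of_forall (fun m => hT m β hβ))
  -- HasDerivAt
  have hnhds : S ∈ nhds α :=
    mem_of_superset (isOpen_Ioo.mem_nhds hα) Set.Ioo_subset_Icc_self
  have hder : HasDerivAt lam L α := by
    rw [hasDerivAt_iff_isLittleO]
    have hbig : (fun β => lam β - lam α - (β - α) • L)
        =O[nhds α] (fun β => (β - α) * (β - α)) := by
      apply Asymptotics.IsBigO.of_bound C2
      filter_upwards [hnhds] with β hβ
      have := hkey β hβ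
      simp only [Real.norm_eq_abs, smul_eq_mul]
      calc |lam β - lam α - (β - α) * L| = |lam β - lam α - L * (β - α)| := by ring_nf
        _ ≤ C2 * (β - α)^2 := this
        _ = C2 * |(β - α) * (β - α)| := by rw [abs_mul_self, sq]
    have hsmall : (fun β : ℝ => (β - α) * (β - α)) =o[nhds α] (fun β => β - α) := by
      have h1 : (fun β : ℝ => β - α) =o[nhds α] (fun _ => (1:ℝ)) := by
        rw [Asymptotics.isLittleO_one_iff]
        have : Tendsto (fun β : ℝ => β - α) (nhds α) (nhds (α - α)) :=
          (continuous_id.sub continuous_const).tendsto α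
        simpa using this
      have := h1.mul_isBigO (Asymptotics.isBigO_refl (fun β : ℝ => β - α) (nhds α))
      simpa using this
    exact hbig.trans_isLittleO hsmall
  exact ⟨hder.differentiableAt, by rw [hder.deriv]; exact hLbd⟩
end
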